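/- arXiv:2302.06483 — 2 statements merged into one kernel-verified Lean document; each statement's English description precedes it below -/
import Mathlib

section
/- Let f^{[α]} ∈ I^{[Σ]} and let G^{[Σ]} ⊆ I^{[Σ]} be complete and a signature Gröbner basis of I^{[Σ]} up to signature sig(α). If f^{[α]} is super reducible by G^{[Σ]}, then f^{[α]} is sig-reducible by G^{[Σ]}. -/
/-!  Signature Gröbner bases in the mixed algebra `R[x₁,…,x_k]⟨y₁,…,y_n⟩`
over a principal ideal domain `R`, following Hofstadler–Verron. -/

open Finsupp

/-- A mixed monomial `v·w`, with `v` a commutative monomial in `x₁,…,x_k`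
(recorded by its exponent vector) and `w` a word in the noncommutative
variables `y₁,…,y_n`. -/
@[ext]
structure MMon (k n : ℕ) where
  c : Fin k →₀ ℕ
  w : FreeMonoid (Fin n)

namespace MMon

instance (k n : ℕ) : One (MMon k n) := ⟨⟨0, 1⟩⟩
noncomputable instance (k n : ℕ) : Mul (MMon k n) := ⟨fun a b => ⟨a.c + b.c, a.w * b.w⟩⟩

@[simp] lemma mul_c {k n : ℕ} (a b : MMon k n) : (a * b).c = a.c + b.c := rfl
@[simp] lemma mul_w {k n : ℕ} (a b : MMon k n) : (a * b).w = a.w * b.w := rfl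
@[simp] lemma one_c {k n : ℕ} : (1 : MMon k n).c = 0 := rfl
@[simp] lemma one_w {k n : ℕ} : (1 : MMon k n).w = 1 := rfl

noncomputable instance (k n : ℕ) : Monoid (MMon k n) where
  mul_assoc a b c := by ext : 1 <;> simp [add_assoc, mul_assoc]
  one_mul a := by ext : 1 <;> simp
  mul_one a := by ext : 1 <;> simp

end MMon

/-- A module monomial `u·a·ε_i·b` of the free bimodule `Σ = (A ⊗_{R[X]} A)^r`. -/
@[ext]
structure ModMon (k n r : ℕ) where
  u : Fin k →₀ ℕ
  a : FreeMonoid (Fin n)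
  i : Fin r
  b : FreeMonoid (Fin n)

instance {k n r : ℕ} [NeZero r] : Inhabited (ModMon k n r) := ⟨⟨0, 1, default, 1⟩⟩

/-- The mixed algebra `A = R[x₁,…,x_k]⟨y₁,…,y_n⟩`, realised as the monoid
algebra of the monoid of mixed monomials. -/
abbrev MixedAlg (R : Type) [CommRing R] (k n : ℕ) : Type := MonoidAlgebra R (MMon k n)

/-- The free `A`-bimodule `Σ = (A ⊗_{R[X]} A)^r`, realised as the free
`R`-module on the module monomials `u·a·ε_i·b`. -/
abbrev SigModule (R : Type) [CommRing R] (k n r : ℕ) : Type := ModMon k n r →₀ R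

section Defs

variable {R : Type} [CommRing R] {k n r : ℕ}

/-- The term `c·m` of `A` (an element of `T(A)` when `c ≠ 0`). -/
noncomputable def trm (m : MMon k n) (c : R) : MixedAlg R k n := MonoidAlgebra.single m c

/-- The word `b ∈ ⟨Y⟩`, viewed as an element of `A`. -/
noncomputable def wrd (b : FreeMonoid (Fin n)) : MixedAlg R k n :=
  MonoidAlgebra.single ⟨0, b⟩ 1

/-- Multiplication `m·σ` of a module monomial by a mixed monomial on the left. -/
noncomputable def mulL (m : MMon k n) (σ : ModMon k n r) : ModMon k n r :=
  ⟨m.c + σ.u, m.w * σ.a, σ.i, σ.b⟩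

/-- Multiplication `σ·m` of a module monomial by a mixed monomial on the right. -/
noncomputable def mulR (σ : ModMon k n r) (m : MMon k n) : ModMon k n r :=
  ⟨σ.u + m.c, σ.a, σ.i, σ.b * m.w⟩

/-- The two-sided multiple `m·σ·b` of a module monomial by a mixed monomial `m`
on the left and a word `b` on the right. -/
noncomputable def mulLR (m : MMon k n) (σ : ModMon k n r) (b : FreeMonoid (Fin n)) : ModMon k n r :=
  ⟨m.c + σ.u, m.w * σ.a, σ.i, σ.b * b⟩

/-- The left action of `A` on the bimodule `Σ`. -/
noncomputable def actL (f : MixedAlg R k n) (α : SigModule R k n r) : SigModule R k n r :=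
  Finsupp.sum f.coeff fun m cm => Finsupp.sum α fun σ cσ => Finsupp.single (mulL m σ) (cm * cσ)

/-- The right action of `A` on the bimodule `Σ`. -/
noncomputable def actR (α : SigModule R k n r) (f : MixedAlg R k n) : SigModule R k n r :=
  Finsupp.sum f.coeff fun m cm => Finsupp.sum α fun σ cσ => Finsupp.single (mulR σ m) (cσ * cm)

/-- The two-sided multiple `t·α·b` of `α ∈ Σ` by the term `t = c·m` on the left
and the word `b` on the right. -/
noncomputable def scaleLR (m : MMon k n) (c : R) (α : SigModule R k n r)
    (b : FreeMonoid (Fin n)) : SigModule R k n r :=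
  Finsupp.sum α fun σ cσ => Finsupp.single (mulLR m σ b) (c * cσ)

/-- The `A`-bimodule homomorphism `Σ → A`, `α ↦ ᾱ`, sending `ε_i` to `f_i`
(where `F i = f_i` are the generators). -/
noncomputable def barMap (F : Fin r → MixedAlg R k n) (α : SigModule R k n r) :
    MixedAlg R k n :=
  Finsupp.sum α fun σ cσ =>
    trm ⟨σ.u, σ.a⟩ cσ * F σ.i * wrd σ.b

/-- The basis vector `ε_i` of `Σ`. -/
noncomputable def epsMod (i : Fin r) : SigModule R k n r :=
  Finsupp.single ⟨0, 1, i, 1⟩ 1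

/-- The labeled module `I^{[Σ]}`: pairs `f^{[α]}` with `ᾱ = f`. -/
def Labeled (F : Fin r → MixedAlg R k n) (p : MixedAlg R k n × SigModule R k n r) : Prop :=
  barMap F p.2 = p.1

/-- A syzygy of `I^{[Σ]}`: an element `α ∈ Σ` with `ᾱ = 0`. -/
def IsSyzygy (F : Fin r → MixedAlg R k n) (γ : SigModule R k n r) : Prop :=
  barMap F γ = 0

section Orders

variable [LinearOrder (MMon k n)] [LinearOrder (ModMon k n r)]

/-- The leading monomial of `f ∈ A` (with `LM 0 = ⊥`). -/
noncomputable def LMb (f : MixedAlg R k n) : WithBot (MMon k n) := f.coeff.support.max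

/-- The leading monomial of `f ∈ A` (defaulting to `1` for `f = 0`). -/
noncomputable def LMd (f : MixedAlg R k n) : MMon k n := WithBot.unbotD 1 (f.coeff.support.max)

/-- The leading coefficient of `f ∈ A` (`0` for `f = 0`). -/
noncomputable def LC (f : MixedAlg R k n) : R := f.coeff (LMd f)

/-- The leading term of `f ∈ A`, as an element of `A` (`0` for `f = 0`). -/
noncomputable def LTerm (f : MixedAlg R k n) : MixedAlg R k n := trm (LMd f) (LC f)

/-- The signature monomial of `α ∈ Σ` (with `⊥` for `α = 0`): the `⪯`-largest
monomial of the support of `α`. -/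
noncomputable def sigb (α : SigModule R k n r) : WithBot (ModMon k n r) := α.support.max

variable [NeZero r]

/-- The signature monomial of `α ∈ Σ`, defaulting for `α = 0`. -/
noncomputable def sigMd (α : SigModule R k n r) : ModMon k n r :=
  WithBot.unbotD default (α.support.max)

/-- The coefficient of the signature of `α`. -/
noncomputable def sigC (α : SigModule R k n r) : R := α (sigMd α)

/-- The signature `sig(α)` of `α ∈ Σ`, as a term, i.e. a single-term element of
`Σ` (`0` for `α = 0`).  Equality `sig α = sig β` of signatures as *terms* is
`sigT α = sigT β`; the relation `sig α ≃ sig β` is `sigb α = sigb β`; the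
relation `sig α ≺ sig β` is `sigb α < sigb β`. -/
noncomputable def sigT (α : SigModule R k n r) : SigModule R k n r :=
  Finsupp.single (sigMd α) (sigC α)

end Orders

/-- The compatibility requirements on the chosen monomial ordering on `M(A)`
and module ordering on `M(Σ)`: both are compatible with multiplication,
both are well-orderings, and they are compatible with each other. -/
structure IsOrderSetting (k n r : ℕ) [LinearOrder (MMon k n)]
    [LinearOrder (ModMon k n r)] : Prop where
  mon_wf : WellFounded ((· < ·) : MMon k n → MMon k n → Prop)
  mod_wf : WellFounded ((· < ·) : ModMon k n r → ModMon k n r → Prop)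
  mon_mul : ∀ a b m m' : MMon k n, m ≤ m' → a * m * b ≤ a * m' * b
  mod_mul : ∀ (m : MMon k n) (b : FreeMonoid (Fin n)) (σ τ : ModMon k n r),
      σ ≤ τ → mulLR m σ b ≤ mulLR m τ b
  compat₁ : ∀ (u v : Fin k →₀ ℕ) (a b : FreeMonoid (Fin n)) (i : Fin r),
      (⟨u, a⟩ : MMon k n) < ⟨v, b⟩ ↔ (⟨u, a, i, 1⟩ : ModMon k n r) < ⟨v, b, i, 1⟩
  compat₂ : ∀ (u v : Fin k →₀ ℕ) (a b : FreeMonoid (Fin n)) (i : Fin r),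
      (⟨u, a⟩ : MMon k n) < ⟨v, b⟩ ↔ (⟨u, 1, i, a⟩ : ModMon k n r) < ⟨v, 1, i, b⟩

end Defs

/-! ### Ambiguities -/

/-- `WordAmb a b c d p q` says that `(a ⊗ b, c ⊗ d, p, q)` is an ambiguity
(overlap, inclusion or external) of the words `p` and `q`. -/
inductive WordAmb {n : ℕ} :
    FreeMonoid (Fin n) → FreeMonoid (Fin n) → FreeMonoid (Fin n) → FreeMonoid (Fin n) →
    FreeMonoid (Fin n) → FreeMonoid (Fin n) → Prop
  | overlap₁ (a b p q : FreeMonoid (Fin n)) (h : a * p = q * b)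
      (ha : a ≠ 1) (hb : b ≠ 1) (hla : a.length < q.length) (hlb : b.length < p.length) :
      WordAmb a 1 1 b p q
  | overlap₂ (a b p q : FreeMonoid (Fin n)) (h : p * a = b * q)
      (ha : a ≠ 1) (hb : b ≠ 1) (hla : a.length < q.length) (hlb : b.length < p.length) :
      WordAmb 1 a b 1 p q
  | inclusion₁ (a b p q : FreeMonoid (Fin n)) (h : p = a * q * b) :
      WordAmb 1 1 a b p q
  | inclusion₂ (a b p q : FreeMonoid (Fin n)) (h : a * p * b = q) :
      WordAmb a b 1 1 p q
  | external₁ (m p q : FreeMonoid (Fin n)) :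
      WordAmb 1 (m * q) (p * m) 1 p q
  | external₂ (m p q : FreeMonoid (Fin n)) :
      WordAmb (q * m) 1 1 (m * p) p q

section Amb

variable {R : Type} [CommRing R] {k n r : ℕ}
variable [LinearOrder (MMon k n)] [LinearOrder (ModMon k n r)]

/-- `IsAmb f g m₁ n₁ m₂ n₂` says that `(m₁ ⊗ n₁, m₂ ⊗ n₂)` is an ambiguity of the
(nonzero) polynomials `f` and `g`: an ambiguity of the word parts of their
leading monomials, with left cofactors completed by `lcm(u,v)/u` resp.
`lcm(u,v)/v` on the commutative parts. -/
def IsAmb (f g : MixedAlg R k n) (m₁ : MMon k n) (n₁ : FreeMonoid (Fin n))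
    (m₂ : MMon k n) (n₂ : FreeMonoid (Fin n)) : Prop :=
  ∃ a b c d : FreeMonoid (Fin n),
    WordAmb a b c d (LMd f).w (LMd g).w ∧
    m₁ = ⟨((LMd f).c ⊔ (LMd g).c) - (LMd f).c, a⟩ ∧ n₁ = b ∧
    m₂ = ⟨((LMd f).c ⊔ (LMd g).c) - (LMd g).c, c⟩ ∧ n₂ = d

/-- The leading monomial `LM(a) = LM(m₁ f n₁) = LM(m₂ g n₂)` of an ambiguity. -/
noncomputable def ambLM (f : MixedAlg R k n) (m₁ : MMon k n) (n₁ : FreeMonoid (Fin n)) :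
    MMon k n :=
  m₁ * LMd f * ⟨0, n₁⟩

variable [IsDomain R] [GCDMonoid R]

/-- The cofactor `lcmlc(f,g)/LC(f)`. -/
noncomputable def cofL (f g : MixedAlg R k n) : R :=
  Classical.choose (dvd_lcm_left (LC f) (LC g))

/-- The cofactor `lcmlc(f,g)/LC(g)`. -/
noncomputable def cofR (f g : MixedAlg R k n) : R :=
  Classical.choose (dvd_lcm_right (LC f) (LC g))

variable [NeZero r]

/-- The signature `SIG(a) = max(sig(c_f m₁ α n₁), −sig(c_g m₂ β n₂))` (first in
case of tie) of an ambiguity `a = (m₁ ⊗ n₁, m₂ ⊗ n₂)` of `f^{[α]]`, `g^{[β]}`,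
as a term (single-term element) of `Σ`. -/
noncomputable def ambSIG (f g : MixedAlg R k n) (α β : SigModule R k n r)
    (m₁ : MMon k n) (n₁ : FreeMonoid (Fin n)) (m₂ : MMon k n) (n₂ : FreeMonoid (Fin n)) :
    SigModule R k n r :=
  if sigb (scaleLR m₂ (cofR f g) β n₂) ≤ sigb (scaleLR m₁ (cofL f g) α n₁) then
    sigT (scaleLR m₁ (cofL f g) α n₁)
  else
    - sigT (scaleLR m₂ (cofR f g) β n₂)

/-- An ambiguity is regular if `sig(m₁ α n₁) ≄ sig(m₂ β n₂)`. -/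
def RegAmb (α β : SigModule R k n r) (m₁ : MMon k n) (n₁ : FreeMonoid (Fin n))
    (m₂ : MMon k n) (n₂ : FreeMonoid (Fin n)) : Prop :=
  sigb (scaleLR m₁ (1 : R) α n₁) ≠ sigb (scaleLR m₂ (1 : R) β n₂)

/-- An ambiguity is singular if `sig(c_f m₁ α n₁) = sig(c_g m₂ β n₂)`. -/
def SingAmb (f g : MixedAlg R k n) (α β : SigModule R k n r) (m₁ : MMon k n)
    (n₁ : FreeMonoid (Fin n)) (m₂ : MMon k n) (n₂ : FreeMonoid (Fin n)) : Prop :=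
  sigT (scaleLR m₁ (cofL f g) α n₁) = sigT (scaleLR m₂ (cofR f g) β n₂)

/-- The polynomial part of the S-polynomial of an ambiguity. -/
noncomputable def SPolP (f g : MixedAlg R k n) (m₁ : MMon k n) (n₁ : FreeMonoid (Fin n))
    (m₂ : MMon k n) (n₂ : FreeMonoid (Fin n)) : MixedAlg R k n :=
  trm m₁ (cofL f g) * f * wrd n₁ - trm m₂ (cofR f g) * g * wrd n₂

/-- The module part of the S-polynomial of an ambiguity. -/
noncomputable def SPolM (f g : MixedAlg R k n) (α β : SigModule R k n r) (m₁ : MMon k n)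
    (n₁ : FreeMonoid (Fin n)) (m₂ : MMon k n) (n₂ : FreeMonoid (Fin n)) :
    SigModule R k n r :=
  scaleLR m₁ (cofL f g) α n₁ - scaleLR m₂ (cofR f g) β n₂

/-- The polynomial part of the G-polynomial of an ambiguity, w.r.t. Bézout
coefficients `c`, `d`. -/
noncomputable def GPolP (c d : R) (f g : MixedAlg R k n) (m₁ : MMon k n)
    (n₁ : FreeMonoid (Fin n)) (m₂ : MMon k n) (n₂ : FreeMonoid (Fin n)) : MixedAlg R k n :=
  trm m₁ c * f * wrd n₁ + trm m₂ d * g * wrd n₂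

/-- The module part of the G-polynomial of an ambiguity, w.r.t. Bézout
coefficients `c`, `d`. -/
noncomputable def GPolM (c d : R) (α β : SigModule R k n r) (m₁ : MMon k n)
    (n₁ : FreeMonoid (Fin n)) (m₂ : MMon k n) (n₂ : FreeMonoid (Fin n)) :
    SigModule R k n r :=
  scaleLR m₁ c α n₁ + scaleLR m₂ d β n₂

/-- `BezoutFor c d f g`: `c, d` are Bézout coefficients for `LC f`, `LC g`. -/
def BezoutFor (c d : R) (f g : MixedAlg R k n) : Prop :=
  c * LC f + d * LC g = gcd (LC f) (LC g)

end Amb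

/-! ### Reductions, bases, cover -/

section Red

variable {R : Type} [CommRing R] {k n r : ℕ}
variable [LinearOrder (MMon k n)] [LinearOrder (ModMon k n r)]

/-- `f^{[α]}` is (top) sig-reducible by `G`: there are `g^{[β]} ∈ G`, a term
`t = c·m` and a word `b` with `LT(t g b) = LT(f) > LT(f - t g b)` and
`sig(t β b) ⪯ sig(α)`. -/
def SigReducible (G : Set (MixedAlg R k n × SigModule R k n r))
    (f : MixedAlg R k n) (α : SigModule R k n r) : Prop :=
  ∃ g β, (g, β) ∈ G ∧ ∃ (m : MMon k n) (c : R) (b : FreeMonoid (Fin n)), c ≠ 0 ∧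
    LTerm (trm m c * g * wrd b) = LTerm f ∧
    LMb (f - trm m c * g * wrd b) < LMb f ∧
    sigb (scaleLR m c β b) ≤ sigb α

/-- `f^{[α]}` is regular sig-reducible by `G`. -/
def RegSigReducible (G : Set (MixedAlg R k n × SigModule R k n r))
    (f : MixedAlg R k n) (α : SigModule R k n r) : Prop :=
  ∃ g β, (g, β) ∈ G ∧ ∃ (m : MMon k n) (c : R) (b : FreeMonoid (Fin n)), c ≠ 0 ∧
    LTerm (trm m c * g * wrd b) = LTerm f ∧
    LMb (f - trm m c * g * wrd b) < LMb f ∧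
    sigb (scaleLR m c β b) < sigb α

/-- `f^{[α]}` is super reducible by `G`: there are `g^{[β]} ∈ G`, a term `t` and
a word `b` with `sig(α) = sig(t β b)` (as terms) and `LM(f) = LM(t g b)`. -/
def SuperReducible [NeZero r] (G : Set (MixedAlg R k n × SigModule R k n r))
    (f : MixedAlg R k n) (α : SigModule R k n r) : Prop :=
  ∃ g β, (g, β) ∈ G ∧ ∃ (m : MMon k n) (c : R) (b : FreeMonoid (Fin n)), c ≠ 0 ∧
    sigT α = sigT (scaleLR m c β b) ∧
    LMb f = LMb (trm m c * g * wrd b)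

/-- `α ∈ Σ` is (top) reducible by the set `H ⊆ Σ`: `sig(α) = sig(t γ b)` for
some `γ ∈ H`, term `t` and word `b`. -/
def ModReducible [NeZero r] (H : Set (SigModule R k n r)) (α : SigModule R k n r) : Prop :=
  ∃ γ ∈ H, ∃ (m : MMon k n) (c : R) (b : FreeMonoid (Fin n)), c ≠ 0 ∧
    sigT α = sigT (scaleLR m c γ b)

/-- `G` is a (strong) signature Gröbner basis of `I^{[Σ]}`. -/
def IsSigGB (F : Fin r → MixedAlg R k n) (G : Set (MixedAlg R k n × SigModule R k n r)) :
    Prop :=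
  ∀ f α, barMap F α = f → f ≠ 0 → SigReducible G f α

/-- `G` is a signature Gröbner basis of `I^{[Σ]}` up to (module monomial)
signature `σ`. -/
def IsSigGBUpTo (F : Fin r → MixedAlg R k n)
    (G : Set (MixedAlg R k n × SigModule R k n r)) (σ : WithBot (ModMon k n r)) : Prop :=
  ∀ f α, barMap F α = f → f ≠ 0 → sigb α < σ → SigReducible G f α

/-- `H` is a syzygy basis of `I^{[Σ]}`. -/
def IsSyzBasis [NeZero r] (F : Fin r → MixedAlg R k n) (H : Set (SigModule R k n r)) :
    Prop :=
  ∀ γ, IsSyzygy F γ → γ ≠ 0 → ModReducible H γ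

variable [IsDomain R] [GCDMonoid R] [NeZero r]

/-- `G` is complete: the G-polynomials (w.r.t. non-singular Bézout coefficients)
of all ambiguities of `G` are sig-reducible by `G`. -/
def CompleteSet (G : Set (MixedAlg R k n × SigModule R k n r)) : Prop :=
  ∀ g₁ β₁ g₂ β₂, (g₁, β₁) ∈ G → (g₂, β₂) ∈ G →
    ∀ m₁ n₁ m₂ n₂, IsAmb g₁ g₂ m₁ n₁ m₂ n₂ →
      ∀ c d, BezoutFor c d g₁ g₂ →
        sigb (GPolM c d β₁ β₂ m₁ n₁ m₂ n₂) = sigb (ambSIG g₁ g₂ β₁ β₂ m₁ n₁ m₂ n₂) →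
        SigReducible G (GPolP c d g₁ g₂ m₁ n₁ m₂ n₂) (GPolM c d β₁ β₂ m₁ n₁ m₂ n₂)

/-- `MonLcm σ₁ σ₂ τ`: the least common multiple `lcm(σ₁,σ₂)` of the module
monomials `σ₁ = u₁a₁ε_jb₁`, `σ₂ = u₂a₂ε_jb₂` is defined and equals `τ`. -/
def MonLcm (σ₁ σ₂ τ : ModMon k n r) : Prop :=
  σ₁.i = σ₂.i ∧ τ.i = σ₁.i ∧ τ.u = σ₁.u ⊔ σ₂.u ∧
  ((τ.a = σ₁.a ∧ ∃ s, σ₁.a = s * σ₂.a) ∨ (τ.a = σ₂.a ∧ ∃ s, σ₂.a = s * σ₁.a)) ∧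
  ((τ.b = σ₁.b ∧ ∃ s, σ₁.b = σ₂.b * s) ∨ (τ.b = σ₂.b ∧ ∃ s, σ₂.b = σ₁.b * s))

/-- `H` is sig-complete: all sig-Combinations of elements of `H` are reducible
by `H`. -/
def SigCompleteSet (H : Set (SigModule R k n r)) : Prop :=
  ∀ γ₁ ∈ H, ∀ γ₂ ∈ H, ∀ τ, MonLcm (sigMd γ₁) (sigMd γ₂) τ →
    ∀ (m₁ : MMon k n) (b₁ : FreeMonoid (Fin n)) (m₂ : MMon k n) (b₂ : FreeMonoid (Fin n)),
      mulLR m₁ (sigMd γ₁) b₁ = τ → mulLR m₂ (sigMd γ₂) b₂ = τ →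
      ∀ c d : R, c * sigC γ₁ + d * sigC γ₂ = gcd (sigC γ₁) (sigC γ₂) →
        ModReducible H (scaleLR m₁ c γ₁ b₁ + scaleLR m₂ d γ₂ b₂)

/-- The ambiguity `a` (of `g₁^{[β₁]}`, `g₂^{[β₂]}`), with signature `SIG(a)` and
leading monomial `LM(a)`, is covered by `(G, H)`: there are `g^{[β]} ∈ G`,
`γ ∈ H`, terms `t, t'` (possibly `0`) and words `b, b'` with
`SIG(a) = sig(t β b) + sig(t' γ b')` and `LM(t g b) < LM(a)`. -/
def CoveredBy (G : Set (MixedAlg R k n × SigModule R k n r))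
    (H : Set (SigModule R k n r)) (Sig : SigModule R k n r) (Lm : MMon k n) : Prop :=
  ∃ g β, (g, β) ∈ G ∧ ∃ γ ∈ H,
    ∃ (m : MMon k n) (c : R) (b : FreeMonoid (Fin n))
      (m' : MMon k n) (c' : R) (b' : FreeMonoid (Fin n)),
      Sig = sigT (scaleLR m c β b) + sigT (scaleLR m' c' γ b') ∧
      LMb (trm m c * g * wrd b) < (Lm : WithBot (MMon k n))

end Red


/-! ### Auxiliary lemmas -/

section AuxWord

variable {ν : ℕ}

private lemma fm_ext {α : Type*} {a b : FreeMonoid α}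
    (h : FreeMonoid.toList a = FreeMonoid.toList b) : a = b := by
  have := congrArg FreeMonoid.ofList h
  simpa [FreeMonoid.ofList_toList] using this

private lemma fm_split {α : Type*} {a b c d : FreeMonoid α} (h : a * b = c * d) :
    (∃ u, c = a * u ∧ b = u * d) ∨ (∃ u, a = c * u ∧ d = u * b) := by
  have h' : FreeMonoid.toList a ++ FreeMonoid.toList b
      = FreeMonoid.toList c ++ FreeMonoid.toList d := by
    simpa [FreeMonoid.toList_mul] using congrArg FreeMonoid.toList h
  rcases List.append_eq_append_iff.1 h' with ⟨u, hu1, hu2⟩ | ⟨u, hu1, hu2⟩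
  · refine .inl ⟨FreeMonoid.ofList u, fm_ext ?_, fm_ext ?_⟩ <;>
      simp [FreeMonoid.toList_mul, FreeMonoid.toList_ofList, hu1, hu2]
  · refine .inr ⟨FreeMonoid.ofList u, fm_ext ?_, fm_ext ?_⟩ <;>
      simp [FreeMonoid.toList_mul, FreeMonoid.toList_ofList, hu1, hu2]

private lemma fm_len_lt {α : Type*} {v s q : FreeMonoid α} (hq : q = v * s) (hv : v ≠ 1) :
    s.length < q.length := by
  have h0 : v.length ≠ 0 := fun h => hv (FreeMonoid.length_eq_zero.1 h)
  rw [hq, FreeMonoid.length_mul]; omega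

private lemma fm_len_lt' {α : Type*} {v s q : FreeMonoid α} (hq : q = s * v) (hv : v ≠ 1) :
    s.length < q.length := by
  have h0 : v.length ≠ 0 := fun h => hv (FreeMonoid.length_eq_zero.1 h)
  rw [hq, FreeMonoid.length_mul]; omega

lemma word_decomp (A₁ B₁ A₂ B₂ p q : FreeMonoid (Fin ν))
    (h : A₁ * p * B₁ = A₂ * q * B₂) :
    ∃ a b c d L Rr, WordAmb a b c d p q ∧
      A₁ = L * a ∧ B₁ = b * Rr ∧ A₂ = L * c ∧ B₂ = d * Rr := by
  rw [mul_assoc, mul_assoc] at h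
  rcases fm_split h with ⟨u, hu1, hu2⟩ | ⟨u, hu1, hu2⟩
  · -- A₂ = A₁ * u, p * B₁ = u * (q * B₂)
    rcases fm_split hu2 with ⟨v, hv1, hv2⟩ | ⟨v, hv1, hv2⟩
    · -- u = p * v, B₁ = v * (q * B₂) : external₁
      exact ⟨1, v * q, p * v, 1, A₁, B₂, .external₁ v p q,
        by simp, by rw [hv2, mul_assoc], by rw [hu1, hv1], (one_mul _).symm⟩
    · -- p = u * v, q * B₂ = v * B₁
      rcases fm_split hv2 with ⟨w, hw1, hw2⟩ | ⟨s, hs1, hs2⟩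
      · -- v = q * w, B₂ = w * B₁ : inclusion₁ (q inside p)
        exact ⟨1, 1, u, w, A₁, B₁, .inclusion₁ u w p q (by rw [hv1, hw1, mul_assoc]),
          by simp, (one_mul _).symm, hu1, hw2⟩
      · -- q = v * s, B₁ = s * B₂
        by_cases hu : u = 1
        · -- p = v : inclusion₂ with a = 1, b = s
          subst hu
          exact ⟨1, s, 1, 1, A₁, B₂, .inclusion₂ 1 s p q (by simp [hv1, hs1]),
            by simp, hs2, by simp [hu1], (one_mul _).symm⟩
        · by_cases hs : s = 1
          · -- q = v, p = u * q : inclusion₁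
            subst hs
            exact ⟨1, 1, u, 1, A₁, B₂, .inclusion₁ u 1 p q (by simp [hv1, hs1]),
              by simp, by simpa using hs2, hu1, (one_mul _).symm⟩
          · by_cases hv : v = 1
            · -- p = u, q = s : external₁ with middle 1
              subst hv
              exact ⟨1, 1 * q, p * 1, 1, A₁, B₂, .external₁ 1 p q,
                by simp, by simp [hs2, hs1], by simp [hu1, hv1], (one_mul _).symm⟩
            · -- overlap₂
              exact ⟨1, s, u, 1, A₁, B₂,
                .overlap₂ s u p q (by rw [hv1, hs1, mul_assoc]) hs hu
                  (fm_len_lt hs1 hv) (fm_len_lt' hv1 hv),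
                by simp, hs2, hu1, (one_mul _).symm⟩
  · -- A₁ = A₂ * u, q * B₂ = u * (p * B₁)
    rcases fm_split hu2 with ⟨v, hv1, hv2⟩ | ⟨v, hv1, hv2⟩
    · -- u = q * v, B₂ = v * (p * B₁) : external₂
      exact ⟨q * v, 1, 1, v * p, A₂, B₁, .external₂ v p q,
        by rw [hu1, hv1], (one_mul _).symm, by simp, by rw [hv2, mul_assoc]⟩
    · -- q = u * v, p * B₁ = v * B₂
      rcases fm_split hv2 with ⟨w, hw1, hw2⟩ | ⟨s, hs1, hs2⟩
      · -- v = p * w, B₂ = w * B₁ : inclusion₂ (p inside q)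
        exact ⟨u, w, 1, 1, A₂, B₂, .inclusion₂ u w p q (by rw [hv1, hw1, mul_assoc]),
          hu1, hw2, by simp, (one_mul _).symm⟩
      · -- p = v * s, B₂ = s * B₁
        by_cases hu : u = 1
        · -- q = v, p = q * s : inclusion₁ with a = 1
          subst hu
          exact ⟨1, 1, 1, s, A₂, B₁, .inclusion₁ 1 s p q (by simp [hs1, hv1]),
            by simp [hu1], (one_mul _).symm, by simp, hs2⟩
        · by_cases hs : s = 1
          · -- p = v, q = u * p : inclusion₂
            subst hs
            exact ⟨u, 1, 1, 1, A₂, B₁, .inclusion₂ u 1 p q (by simp [hv1, hs1]),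
              hu1, (one_mul _).symm, by simp, by simpa using hs2⟩
          · by_cases hv : v = 1
            · -- q = u, p = s : external₂ with middle 1
              subst hv
              exact ⟨q * 1, 1, 1, 1 * p, A₂, B₁, .external₂ 1 p q,
                by simp [hu1, hv1], (one_mul _).symm, by simp, by simp [hs2, hs1]⟩
            · -- overlap₁
              exact ⟨u, 1, 1, s, A₂, B₁,
                .overlap₁ u s p q (by rw [hv1, hs1, mul_assoc]) hu hs
                  (fm_len_lt' hv1 hv) (fm_len_lt hs1 hv),
                hu1, (one_mul _).symm, by simp, hs2⟩

end AuxWord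

set_option linter.unusedSectionVars false

section AuxMax

variable {R : Type} [CommRing R] {A B : Type*} [LinearOrder A] [LinearOrder B]

private lemma supmax_le {X : A →₀ R} {M : A} (hle : ∀ τ ∈ X.support, τ ≤ M) :
    X.support.max ≤ (M : WithBot A) := by
  rcases X.support.eq_empty_or_nonempty with he | hne
  · simp [he]
  · rw [← Finset.coe_max' hne, WithBot.coe_le_coe]
    exact Finset.max'_le _ _ _ hle

private lemma supmax_eq {X : A →₀ R} {M : A} (hM : X M ≠ 0) (hle : ∀ τ ∈ X.support, τ ≤ M) :
    X.support.max = (M : WithBot A) :=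
  le_antisymm (supmax_le hle) (Finset.le_max (Finsupp.mem_support_iff.2 hM))

private lemma supmax_lt {X : A →₀ R} {M : A} (hlt : ∀ τ ∈ X.support, τ < M) :
    X.support.max < (M : WithBot A) := by
  rcases X.support.eq_empty_or_nonempty with he | hne
  · simp only [he, Finset.max_empty]; exact WithBot.bot_lt_coe M
  · rw [← Finset.coe_max' hne, WithBot.coe_lt_coe]
    exact hlt _ (Finset.max'_mem _ hne)

private lemma max_image {φ : A → B} (hφ : StrictMono φ) (s : Finset A) :
    (s.image φ).max = s.max.map φ := by
  classical
  rcases s.eq_empty_or_nonempty with he | hne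
  · simp [he]
  · have hne' : (s.image φ).Nonempty := hne.image φ
    rw [← Finset.coe_max' hne, ← Finset.coe_max' hne']
    have : (s.image φ).max' hne' = φ (s.max' hne) := by
      refine le_antisymm (Finset.max'_le _ _ _ ?_) (Finset.le_max' _ _ ?_)
      · intro y hy
        rcases Finset.mem_image.1 hy with ⟨x, hx, rfl⟩
        exact hφ.monotone (Finset.le_max' _ _ hx)
      · exact Finset.mem_image_of_mem φ (Finset.max'_mem _ hne)
    rw [this]; rfl

private lemma mapD_max {φ : A → B} (hφ : StrictMono φ) (X : A →₀ R) :
    (Finsupp.mapDomain φ X).support.max = X.support.max.map φ := by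
  classical
  rw [Finsupp.mapDomain_support_of_injective hφ.injective, max_image hφ]

private lemma max_unbot' (X : A →₀ R) (hX : X ≠ 0) (e : A) :
    X.support.max = ↑(WithBot.unbotD e X.support.max) := by
  rcases Finset.max_of_nonempty (Finsupp.support_nonempty_iff.2 hX) with ⟨M, hM⟩
  rw [hM]; rfl

private lemma apply_unbot'_ne (X : A →₀ R) (hX : X ≠ 0) (e : A) :
    X (WithBot.unbotD e X.support.max) ≠ 0 := by
  have h := max_unbot' X hX e
  exact Finsupp.mem_support_iff.1 (Finset.mem_of_max h)

end AuxMax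

section AuxAlg

variable {R : Type} [CommRing R] {k n r : ℕ}

/-- The monomial map `σ ↦ m σ b`. -/
noncomputable def phiM (m : MMon k n) (b : FreeMonoid (Fin n)) : MMon k n → MMon k n :=
  fun σ => m * σ * ⟨0, b⟩

lemma phiM_inj (m : MMon k n) (b : FreeMonoid (Fin n)) : Function.Injective (phiM m b) := by
  intro σ τ h
  simp only [phiM] at h
  rw [MMon.ext_iff] at h ⊢
  obtain ⟨h1, h2⟩ := h
  simp only [MMon.mul_c, MMon.mul_w] at h1 h2
  constructor
  · have := add_right_cancel h1; exact add_left_cancel this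
  · exact mul_left_cancel (mul_right_cancel h2)

lemma mulLRm_inj (m : MMon k n) (b : FreeMonoid (Fin n)) :
    Function.Injective (fun σ : ModMon k n r => mulLR m σ b) := by
  intro σ τ h
  rw [ModMon.ext_iff] at h ⊢
  obtain ⟨h1, h2, h3, h4⟩ := h
  exact ⟨add_left_cancel h1, mul_left_cancel h2, h3, mul_right_cancel h4⟩

lemma tgb_eq (m : MMon k n) (c : R) (g : MixedAlg R k n) (b : FreeMonoid (Fin n)) :
    (trm m c * g * wrd b).coeff = Finsupp.mapDomain (phiM m b) (c • g.coeff) := by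
  classical
  induction g using MonoidAlgebra.induction with
  | zero => simp [trm, wrd]
  | single_add a e f ha he ih =>
    rw [mul_add, add_mul, MonoidAlgebra.coeff_add, MonoidAlgebra.coeff_add, smul_add,
      Finsupp.mapDomain_add, ← ih]
    congr 1
    rw [trm, wrd, MonoidAlgebra.single_mul_single, MonoidAlgebra.single_mul_single,
      mul_one, MonoidAlgebra.coeff_single, MonoidAlgebra.coeff_single, Finsupp.smul_single,
      Finsupp.mapDomain_single, smul_eq_mul, phiM]

lemma scaleLR_eq (m : MMon k n) (c : R) (β : SigModule R k n r) (b : FreeMonoid (Fin n)) :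
    scaleLR m c β b = Finsupp.mapDomain (fun σ => mulLR m σ b) (c • β) := by
  classical
  induction β using Finsupp.induction with
  | zero => simp [scaleLR]
  | single_add a e f ha he ih =>
    rw [smul_add, Finsupp.mapDomain_add, ← ih, Finsupp.smul_single, Finsupp.mapDomain_single]
    rw [scaleLR, Finsupp.sum_add_index, scaleLR]
    · congr 1
      rw [Finsupp.sum_single_index] <;> simp
    · intro τ _; simp
    · intro τ _ e₁ e₂; rw [mul_add, Finsupp.single_add]

variable [LinearOrder (MMon k n)] [LinearOrder (ModMon k n r)]

lemma phiM_smono (hord : IsOrderSetting k n r) (m : MMon k n) (b : FreeMonoid (Fin n)) :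
    StrictMono (phiM m b) :=
  Monotone.strictMono_of_injective (fun _ _ h => hord.mon_mul _ _ _ _ h) (phiM_inj m b)

lemma mulLRm_smono (hord : IsOrderSetting k n r) (m : MMon k n) (b : FreeMonoid (Fin n)) :
    StrictMono (fun σ : ModMon k n r => mulLR m σ b) :=
  Monotone.strictMono_of_injective (fun _ _ h => hord.mod_mul m b _ _ h) (mulLRm_inj m b)

end AuxAlg


section AuxDerived

variable {R : Type} [CommRing R] {k n r : ℕ}
variable {A : Type*} [LinearOrder A]

private lemma supmax_sub_lt {X Y : A →₀ R} {M : A} (hX : X.support.max ≤ ↑M)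
    (hY : Y.support.max ≤ ↑M) (hc : X M = Y M) : (X - Y).support.max < ↑M := by
  classical
  apply supmax_lt
  intro τ hτ
  have hne : τ ≠ M := by
    intro hEq; subst hEq
    rw [Finsupp.mem_support_iff, Finsupp.sub_apply, hc, sub_self] at hτ
    exact hτ rfl
  have hmem := Finsupp.support_sub hτ
  have hle : (τ : WithBot A) ≤ ↑M := by
    rcases Finset.mem_union.1 hmem with h' | h'
    · exact le_trans (Finset.le_max h') hX
    · exact le_trans (Finset.le_max h') hY
  exact lt_of_le_of_ne (WithBot.coe_le_coe.1 hle) hne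

private lemma supmax_add_eq {X Y : A →₀ R} {M : A} (hX : X.support.max = ↑M)
    (hY : Y.support.max < ↑M) : (X + Y).support.max = ↑M ∧ (X + Y) M = X M := by
  classical
  have hYM : Y M = 0 := by
    by_contra h
    exact absurd (lt_of_le_of_lt (Finset.le_max (Finsupp.mem_support_iff.2 h)) hY)
      (lt_irrefl _)
  have happ : (X + Y) M = X M := by rw [Finsupp.add_apply, hYM, add_zero]
  refine ⟨supmax_eq ?_ ?_, happ⟩
  · rw [happ]; exact Finsupp.mem_support_iff.1 (Finset.mem_of_max hX)
  · intro τ hτ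
    have hmem := Finsupp.support_add hτ
    have : (τ : WithBot A) ≤ ↑M := by
      rcases Finset.mem_union.1 hmem with h' | h'
      · exact (Finset.le_max h').trans_eq hX
      · exact le_trans (Finset.le_max h') hY.le
    exact WithBot.coe_le_coe.1 this

variable [LinearOrder (MMon k n)] [LinearOrder (ModMon k n r)] [NeZero r]

lemma LMb_def' (f : MixedAlg R k n) : LMb f = f.coeff.support.max := rfl
lemma sigb_def' (α : SigModule R k n r) : sigb α = α.support.max := rfl

lemma LMb_eq_coe {f : MixedAlg R k n} (hf : f ≠ 0) : LMb f = ↑(LMd f) :=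
  max_unbot' f.coeff (MonoidAlgebra.coeff_eq_zero.not.2 hf) 1
lemma LC_ne {f : MixedAlg R k n} (hf : f ≠ 0) : LC f ≠ 0 :=
  apply_unbot'_ne f.coeff (MonoidAlgebra.coeff_eq_zero.not.2 hf) 1
lemma sigb_eq_coe {α : SigModule R k n r} (h : α ≠ 0) : sigb α = ↑(sigMd α) :=
  max_unbot' α h default
lemma sigC_ne {α : SigModule R k n r} (h : α ≠ 0) : sigC α ≠ 0 := apply_unbot'_ne α h default

lemma LMb_bot_iff (f : MixedAlg R k n) : LMb f = ⊥ ↔ f = 0 := by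
  rw [LMb, Finset.max_eq_bot, Finsupp.support_eq_empty, MonoidAlgebra.coeff_eq_zero]

lemma sigb_bot_iff (α : SigModule R k n r) : sigb α = ⊥ ↔ α = 0 := by
  rw [sigb, Finset.max_eq_bot, Finsupp.support_eq_empty]

lemma sigT_zero : sigT (0 : SigModule R k n r) = 0 := by
  rw [sigT]
  have : sigC (0 : SigModule R k n r) = 0 := rfl
  rw [this, Finsupp.single_zero]

lemma sigT_ne_zero {α : SigModule R k n r} (h : α ≠ 0) : sigT α ≠ 0 :=
  fun hz => sigC_ne h (Finsupp.single_eq_zero.1 hz)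

lemma sigT_inj {α γ : SigModule R k n r} (h : sigT α = sigT γ) (hα : α ≠ 0) :
    sigMd α = sigMd γ ∧ sigC α = sigC γ := by
  rcases (Finsupp.single_eq_single_iff _ _ _ _).1 h with ⟨h1, h2⟩ | ⟨h1, _⟩
  · exact ⟨h1, h2⟩
  · exact absurd h1 (sigC_ne hα)

lemma sigb_sigT (α : SigModule R k n r) : sigb (sigT α) = sigb α := by
  by_cases h : α = 0
  · rw [h, sigT_zero]
  · rw [sigb_eq_coe h, sigb, sigT, Finsupp.support_single_ne_zero _ (sigC_ne h)]
    rfl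

lemma sigb_neg (α : SigModule R k n r) : sigb (-α) = sigb α := by
  rw [sigb, sigb, Finsupp.support_neg]

end AuxDerived

section AuxScale

variable {R : Type} [CommRing R] [IsDomain R] {k n r : ℕ} [NeZero r]
variable [LinearOrder (MMon k n)] [LinearOrder (ModMon k n r)]

lemma scaleLR_zero_c (m : MMon k n) (β : SigModule R k n r) (b : FreeMonoid (Fin n)) :
    scaleLR m (0 : R) β b = 0 := by
  rw [scaleLR_eq, zero_smul, Finsupp.mapDomain_zero]

lemma scaleLR_zero_β (m : MMon k n) (c : R) (b : FreeMonoid (Fin n)) :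
    scaleLR m c (0 : SigModule R k n r) b = 0 := by
  rw [scaleLR_eq, smul_zero, Finsupp.mapDomain_zero]

lemma scaleLR_add_c (m : MMon k n) (c d : R) (β : SigModule R k n r) (b : FreeMonoid (Fin n)) :
    scaleLR m c β b + scaleLR m d β b = scaleLR m (c + d) β b := by
  rw [scaleLR_eq, scaleLR_eq, scaleLR_eq, add_smul, Finsupp.mapDomain_add]

lemma sigb_scaleLR (hord : IsOrderSetting k n r) (m : MMon k n) {c : R} (hc : c ≠ 0)
    (β : SigModule R k n r) (b : FreeMonoid (Fin n)) :
    sigb (scaleLR m c β b) = (sigb β).map (fun σ => mulLR m σ b) := by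
  rw [sigb_def', sigb_def', scaleLR_eq, mapD_max (mulLRm_smono hord m b),
    Finsupp.support_smul_eq hc]

lemma sigb_scaleLR_coe (hord : IsOrderSetting k n r) (m : MMon k n) {c : R} (hc : c ≠ 0)
    {β : SigModule R k n r} (hβ : β ≠ 0) (b : FreeMonoid (Fin n)) :
    sigb (scaleLR m c β b) = ↑(mulLR m (sigMd β) b) := by
  rw [sigb_scaleLR hord m hc β b, sigb_eq_coe hβ]; rfl

lemma scaleLR_ne_zero (hord : IsOrderSetting k n r) (m : MMon k n) {c : R} (hc : c ≠ 0)
    {β : SigModule R k n r} (hβ : β ≠ 0) (b : FreeMonoid (Fin n)) :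
    scaleLR m c β b ≠ 0 := by
  intro h
  have h1 := sigb_scaleLR_coe hord m hc hβ b
  rw [h, (sigb_bot_iff (0 : SigModule R k n r)).2 rfl] at h1
  exact WithBot.bot_ne_coe h1

lemma sigMd_scaleLR (hord : IsOrderSetting k n r) (m : MMon k n) {c : R} (hc : c ≠ 0)
    {β : SigModule R k n r} (hβ : β ≠ 0) (b : FreeMonoid (Fin n)) :
    sigMd (scaleLR m c β b) = mulLR m (sigMd β) b := by
  have h1 := sigb_scaleLR_coe hord m hc hβ b
  have h2 := sigb_eq_coe (scaleLR_ne_zero hord m hc hβ b)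
  rw [h1] at h2
  exact (WithBot.coe_inj.1 h2).symm

lemma sigC_scaleLR (hord : IsOrderSetting k n r) (m : MMon k n) {c : R} (hc : c ≠ 0)
    {β : SigModule R k n r} (hβ : β ≠ 0) (b : FreeMonoid (Fin n)) :
    sigC (scaleLR m c β b) = c * sigC β := by
  rw [sigC, sigMd_scaleLR hord m hc hβ b, scaleLR_eq,
    Finsupp.mapDomain_apply (mulLRm_inj m b), Finsupp.smul_apply, smul_eq_mul]
  rfl

end AuxScale

section AuxTgb

variable {R : Type} [CommRing R] [IsDomain R] {k n r : ℕ}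
variable [LinearOrder (MMon k n)] [LinearOrder (ModMon k n r)]

lemma LMb_tgb (hord : IsOrderSetting k n r) (m : MMon k n) {c : R} (hc : c ≠ 0)
    (g : MixedAlg R k n) (b : FreeMonoid (Fin n)) :
    LMb (trm m c * g * wrd b) = (LMb g).map (phiM m b) := by
  rw [LMb_def', LMb_def', tgb_eq, mapD_max (phiM_smono hord m b), Finsupp.support_smul_eq hc]

lemma LMb_tgb_coe (hord : IsOrderSetting k n r) (m : MMon k n) {c : R} (hc : c ≠ 0)
    {g : MixedAlg R k n} (hg : g ≠ 0) (b : FreeMonoid (Fin n)) :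
    LMb (trm m c * g * wrd b) = ↑(phiM m b (LMd g)) := by
  rw [LMb_tgb hord m hc g b, LMb_eq_coe hg]; rfl

lemma tgb_ne_zero (hord : IsOrderSetting k n r) (m : MMon k n) {c : R} (hc : c ≠ 0)
    {g : MixedAlg R k n} (hg : g ≠ 0) (b : FreeMonoid (Fin n)) :
    trm m c * g * wrd b ≠ 0 := by
  intro h
  have h1 := LMb_tgb_coe hord m hc hg b
  rw [h, (LMb_bot_iff (0 : MixedAlg R k n)).2 rfl] at h1
  exact WithBot.bot_ne_coe h1

lemma LMd_tgb (hord : IsOrderSetting k n r) (m : MMon k n) {c : R} (hc : c ≠ 0)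
    {g : MixedAlg R k n} (hg : g ≠ 0) (b : FreeMonoid (Fin n)) :
    LMd (trm m c * g * wrd b) = phiM m b (LMd g) := by
  have h1 := LMb_tgb_coe hord m hc hg b
  have h2 := LMb_eq_coe (tgb_ne_zero hord m hc hg b)
  rw [h1] at h2
  exact (WithBot.coe_inj.1 h2).symm

lemma LC_tgb (hord : IsOrderSetting k n r) (m : MMon k n) {c : R} (hc : c ≠ 0)
    {g : MixedAlg R k n} (hg : g ≠ 0) (b : FreeMonoid (Fin n)) :
    LC (trm m c * g * wrd b) = c * LC g := by
  rw [LC, LMd_tgb hord m hc hg b, tgb_eq, Finsupp.mapDomain_apply (phiM_inj m b),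
    Finsupp.smul_apply, smul_eq_mul]
  rfl

lemma LTerm_tgb (hord : IsOrderSetting k n r) (m : MMon k n) {c : R} (hc : c ≠ 0)
    {g : MixedAlg R k n} (hg : g ≠ 0) (b : FreeMonoid (Fin n)) :
    LTerm (trm m c * g * wrd b) = MonoidAlgebra.single (phiM m b (LMd g)) (c * LC g) := by
  rw [LTerm, LMd_tgb hord m hc hg b, LC_tgb hord m hc hg b]; rfl

end AuxTgb

section AuxBar

variable {R : Type} [CommRing R] {k n r : ℕ}

lemma barMap_single (F : Fin r → MixedAlg R k n) (τ : ModMon k n r) (e : R) :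
    barMap F (Finsupp.single τ e) = trm ⟨τ.u, τ.a⟩ e * F τ.i * wrd τ.b := by
  rw [barMap, Finsupp.sum_single_index]
  simp [trm]

lemma barMap_sub (F : Fin r → MixedAlg R k n) (X Y : SigModule R k n r) :
    barMap F (X - Y) = barMap F X - barMap F Y := by
  rw [barMap, Finsupp.sum_sub_index]
  · rfl
  · intro τ e₁ e₂
    have h : (trm ⟨τ.u, τ.a⟩ (e₁ - e₂) : MixedAlg R k n)
        = trm ⟨τ.u, τ.a⟩ e₁ - trm ⟨τ.u, τ.a⟩ e₂ := MonoidAlgebra.single_sub _ _ _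
    rw [h, sub_mul, sub_mul]

lemma barMap_add (F : Fin r → MixedAlg R k n) (X Y : SigModule R k n r) :
    barMap F (X + Y) = barMap F X + barMap F Y := by
  rw [barMap, Finsupp.sum_add_index']
  · rfl
  · intro τ; simp [trm]
  · intro τ e₁ e₂
    have h : (trm ⟨τ.u, τ.a⟩ (e₁ + e₂) : MixedAlg R k n)
        = trm ⟨τ.u, τ.a⟩ e₁ + trm ⟨τ.u, τ.a⟩ e₂ := MonoidAlgebra.single_add _ _ _
    rw [h, add_mul, add_mul]

lemma barMap_zero (F : Fin r → MixedAlg R k n) : barMap F (0 : SigModule R k n r) = 0 := by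
  simp [barMap]

lemma wrd_mul_wrd (b₁ b₂ : FreeMonoid (Fin n)) :
    (wrd b₁ : MixedAlg R k n) * wrd b₂ = wrd (b₁ * b₂) := by
  rw [wrd, wrd, wrd, MonoidAlgebra.single_mul_single, mul_one]
  congr 1

lemma barMap_scaleLR (F : Fin r → MixedAlg R k n) (m : MMon k n) (c : R)
    (β : SigModule R k n r) (b : FreeMonoid (Fin n)) :
    barMap F (scaleLR m c β b) = trm m c * barMap F β * wrd b := by
  classical
  induction β using Finsupp.induction with
  | zero =>
    rw [scaleLR_eq, smul_zero, Finsupp.mapDomain_zero, barMap_zero, mul_zero, zero_mul]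
  | single_add a e f ha he ih =>
    have hadd : scaleLR m c (Finsupp.single a e + f) b
        = scaleLR m c (Finsupp.single a e) b + scaleLR m c f b := by
      rw [scaleLR_eq, scaleLR_eq, scaleLR_eq, smul_add, Finsupp.mapDomain_add]
    rw [hadd, barMap_add, ih, barMap_add, mul_add, add_mul]
    congr 1
    have hs : scaleLR m c (Finsupp.single a e) b
        = Finsupp.single (mulLR m a b) (c * e) := by
      rw [scaleLR_eq, Finsupp.smul_single, Finsupp.mapDomain_single, smul_eq_mul]
    rw [hs, barMap_single, barMap_single]
    have h1 : trm m c * trm ⟨a.u, a.a⟩ e = (trm ⟨(mulLR m a b).u, (mulLR m a b).a⟩ (c * e)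
        : MixedAlg R k n) := by
      rw [trm, trm, trm, MonoidAlgebra.single_mul_single]
      rfl
    have h2 : (wrd a.b : MixedAlg R k n) * wrd b = wrd ((mulLR m a b).b) := by
      rw [wrd_mul_wrd]; rfl
    calc trm ⟨(mulLR m a b).u, (mulLR m a b).a⟩ (c * e) * F (mulLR m a b).i
          * wrd ((mulLR m a b).b)
        = (trm m c * trm ⟨a.u, a.a⟩ e) * F a.i * (wrd a.b * wrd b) := by rw [h1, h2]; rfl
      _ = trm m c * (trm ⟨a.u, a.a⟩ e * F a.i * wrd a.b) * wrd b := by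
          simp only [mul_assoc]

end AuxBar

section AuxMon

variable {k n r : ℕ}

lemma mulLR_comp (l m : MMon k n) (rw' n₁ : FreeMonoid (Fin n)) (σ : ModMon k n r) :
    mulLR l (mulLR m σ n₁) rw' = mulLR (l * m) σ (n₁ * rw') := by
  simp [mulLR, add_assoc, mul_assoc]

lemma phiM_comp (l m : MMon k n) (rw' n₁ : FreeMonoid (Fin n)) (σ : MMon k n) :
    phiM l rw' (phiM m n₁ σ) = phiM (l * m) (n₁ * rw') σ := by
  simp only [phiM]
  ext : 1 <;> simp [add_assoc, mul_assoc]

lemma wordamb_eq {a b c d p q : FreeMonoid (Fin n)} (h : WordAmb a b c d p q) :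
    a * p * b = c * q * d := by
  cases h with
  | overlap₁ a b p q h ha hb hla hlb => simpa using h
  | overlap₂ a b p q h ha hb hla hlb => simpa using h
  | inclusion₁ a b p q h => simpa using h
  | inclusion₂ a b p q h => simpa using h
  | external₁ m p q => simp [mul_assoc]
  | external₂ m p q => simp [mul_assoc]

lemma amb_top_eq (hG hG' : MMon k n) {a₁ n₁ a₂ n₂ : FreeMonoid (Fin n)}
    (hW : WordAmb a₁ n₁ a₂ n₂ hG.w hG'.w) :
    phiM ⟨(hG.c ⊔ hG'.c) - hG.c, a₁⟩ n₁ hG = phiM ⟨(hG.c ⊔ hG'.c) - hG'.c, a₂⟩ n₂ hG' := by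
  simp only [phiM]
  ext : 1
  · simp only [MMon.mul_c]
    have h1 : ((hG.c ⊔ hG'.c) - hG.c) + hG.c = hG.c ⊔ hG'.c := tsub_add_cancel_of_le le_sup_left
    have h2 : ((hG.c ⊔ hG'.c) - hG'.c) + hG'.c = hG.c ⊔ hG'.c := tsub_add_cancel_of_le le_sup_right
    show ((hG.c ⊔ hG'.c) - hG.c) + hG.c + 0 = ((hG.c ⊔ hG'.c) - hG'.c) + hG'.c + 0
    rw [h1, h2]
  · simp only [MMon.mul_w]
    exact wordamb_eq hW

lemma mon_decomp (hG hG' m m' : MMon k n) (b b' : FreeMonoid (Fin n))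
    (h : phiM m b hG = phiM m' b' hG') :
    ∃ (a₁ n₁ a₂ n₂ : FreeMonoid (Fin n)) (l : MMon k n) (rw' : FreeMonoid (Fin n)),
      WordAmb a₁ n₁ a₂ n₂ hG.w hG'.w ∧
      m = l * ⟨(hG.c ⊔ hG'.c) - hG.c, a₁⟩ ∧ b = n₁ * rw' ∧
      m' = l * ⟨(hG.c ⊔ hG'.c) - hG'.c, a₂⟩ ∧ b' = n₂ * rw' := by
  have hc : m.c + hG.c = m'.c + hG'.c := by
    have := congrArg MMon.c h
    simpa [phiM] using this
  have hw : m.w * hG.w * b = m'.w * hG'.w * b' := by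
    have := congrArg MMon.w h
    simpa [phiM] using this
  obtain ⟨a₁, n₁, a₂, n₂, L, Rr, hW, hA₁, hB₁, hA₂, hB₂⟩ :=
    word_decomp m.w b m'.w b' hG.w hG'.w hw
  set s := hG.c ⊔ hG'.c with hs
  have hle1 : hG.c ≤ m.c + hG.c := le_add_self
  have hle2 : hG'.c ≤ m.c + hG.c := hc ▸ le_add_self
  have hles : s ≤ m.c + hG.c := sup_le hle1 hle2
  refine ⟨a₁, n₁, a₂, n₂, ⟨(m.c + hG.c) - s, L⟩, Rr, hW, ?_, hB₁, ?_, hB₂⟩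
  · ext : 1
    · show m.c = ((m.c + hG.c) - s) + (s - hG.c)
      rw [tsub_add_tsub_cancel hles le_sup_left, add_tsub_cancel_right]
    · exact hA₁
  · ext : 1
    · show m'.c = ((m.c + hG.c) - s) + (s - hG'.c)
      rw [tsub_add_tsub_cancel hles le_sup_right, hc, add_tsub_cancel_right]
    · exact hA₂

end AuxMon

section AuxNoZero

variable {R : Type} [CommRing R] [IsDomain R] [GCDMonoid R] {k n r : ℕ} [NeZero r]
variable [LinearOrder (MMon k n)] [LinearOrder (ModMon k n r)]

lemma LMd_zero : LMd (0 : MixedAlg R k n) = 1 := by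
  rw [LMd]; simp

lemma no_zero_mem (hord : IsOrderSetting k n r)
    {G : Set (MixedAlg R k n × SigModule R k n r)}
    (hcomp : CompleteSet G) (β : SigModule R k n r)
    (hβG : ((0 : MixedAlg R k n), β) ∈ G) : False := by
  classical
  have hW : WordAmb (1 : FreeMonoid (Fin n)) 1 1 1
      (LMd (0 : MixedAlg R k n)).w (LMd (0 : MixedAlg R k n)).w := by
    rw [LMd_zero, MMon.one_w]
    exact WordAmb.inclusion₁ 1 1 1 1 (by simp)
  have hAmb : IsAmb (0 : MixedAlg R k n) 0 1 1 1 1 :=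
    ⟨1, 1, 1, 1, hW, by ext : 1 <;> simp [LMd_zero], rfl,
      by ext : 1 <;> simp [LMd_zero], rfl⟩
  set X₁ := scaleLR (1 : MMon k n) (cofL (0 : MixedAlg R k n) 0) β 1 with hX₁
  set X₂ := scaleLR (1 : MMon k n) (cofR (0 : MixedAlg R k n) 0) β 1 with hX₂
  have hamb_def : ambSIG (0 : MixedAlg R k n) 0 β β 1 1 1 1
      = if sigb X₂ ≤ sigb X₁ then sigT X₁ else -sigT X₂ := rfl
  have hLC0 : LC (0 : MixedAlg R k n) = 0 := rfl
  have hbez : ∀ c d : R, BezoutFor c d (0 : MixedAlg R k n) 0 := by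
    intro c d
    show c * LC (0 : MixedAlg R k n) + d * LC (0 : MixedAlg R k n) = gcd _ _
    rw [hLC0, mul_zero, mul_zero, add_zero]
    exact ((gcd_eq_zero_iff (0 : R) 0).2 ⟨rfl, rfl⟩).symm
  have hGP0 : ∀ c d : R, GPolP c d (0 : MixedAlg R k n) 0 1 1 1 1 = 0 := by
    intro c d
    show trm 1 c * 0 * wrd 1 + trm 1 d * 0 * wrd 1 = 0
    rw [mul_zero, zero_mul, mul_zero, zero_mul, add_zero]
  have habs : ∀ γ : SigModule R k n r, SigReducible G (0 : MixedAlg R k n) γ → False := by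
    rintro γ ⟨g', β', _, m', c', b', hc', hLT', hlt', _⟩
    have hb : LMb (0 : MixedAlg R k n) = ⊥ := (LMb_bot_iff 0).2 rfl
    rw [hb] at hlt'
    exact not_lt_bot hlt'
  by_cases hif : sigb X₂ ≤ sigb X₁
  · have h1 : GPolM (cofL (0 : MixedAlg R k n) 0) (0 : R) β β 1 1 1 1 = X₁ := by
      show scaleLR 1 _ β 1 + scaleLR 1 (0 : R) β 1 = X₁
      rw [scaleLR_zero_c, add_zero, hX₁]
    have hsigeq : sigb (GPolM (cofL (0 : MixedAlg R k n) 0) (0 : R) β β 1 1 1 1)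
        = sigb (ambSIG (0 : MixedAlg R k n) 0 β β 1 1 1 1) := by
      rw [h1, hamb_def, if_pos hif, sigb_sigT]
    have := hcomp 0 β 0 β hβG hβG 1 1 1 1 hAmb _ _ (hbez _ _) hsigeq
    rw [hGP0] at this
    exact habs _ this
  · have h1 : GPolM (0 : R) (cofR (0 : MixedAlg R k n) 0) β β 1 1 1 1 = X₂ := by
      show scaleLR 1 (0 : R) β 1 + scaleLR 1 _ β 1 = X₂
      rw [scaleLR_zero_c, zero_add, hX₂]
    have hsigeq : sigb (GPolM (0 : R) (cofR (0 : MixedAlg R k n) 0) β β 1 1 1 1)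
        = sigb (ambSIG (0 : MixedAlg R k n) 0 β β 1 1 1 1) := by
      rw [h1, hamb_def, if_neg hif, sigb_neg, sigb_sigT]
    have := hcomp 0 β 0 β hβG hβG 1 1 1 1 hAmb _ _ (hbez _ _) hsigeq
    rw [hGP0] at this
    exact habs _ this

end AuxNoZero
/-- Proposition 4.12.  If `G ⊆ I^{[Σ]}` is complete and a
signature Gröbner basis up to signature `sig(α)`, and `f^{[α]} ∈ I^{[Σ]}` is
super reducible by `G`, then `f^{[α]}` is sig-reducible by `G`. -/
theorem super_reducible_implies_sig_reducible
    {R : Type} [CommRing R] [IsDomain R] [IsPrincipalIdealRing R] [GCDMonoid R]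
    {k n r : ℕ} [NeZero r]
    [LinearOrder (MMon k n)] [LinearOrder (ModMon k n r)]
    (hord : IsOrderSetting k n r)
    (F : Fin r → MixedAlg R k n)
    (G : Set (MixedAlg R k n × SigModule R k n r))
    (hGI : ∀ p ∈ G, Labeled F p)
    (hcomp : CompleteSet G)
    (f : MixedAlg R k n) (α : SigModule R k n r)
    (hlab : barMap F α = f)
    (hGB : IsSigGBUpTo F G (sigb α))
    (hsup : SuperReducible G f α) :
    SigReducible G f α := by
  classical
  obtain ⟨g, β, hgG, m, c₀, b, hc₀, hsigT, hLMb⟩ := hsup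
  have hno : ∀ γ : SigModule R k n r, ((0 : MixedAlg R k n), γ) ∈ G → False := fun γ hγ =>
    no_zero_mem hord hcomp γ hγ
  have hg0 : g ≠ 0 := fun h => hno β (h ▸ hgG)
  have hα : α ≠ 0 := by
    intro h0
    rw [h0, sigT_zero] at hsigT
    have hβ0 : β = 0 := by
      by_contra hβ'
      exact sigT_ne_zero (scaleLR_ne_zero hord m hc₀ hβ' b) hsigT.symm
    have hgb : barMap F β = g := hGI (g, β) hgG
    rw [hβ0, barMap_zero] at hgb
    exact hno β (hgb ▸ hgG)
  have hβ : β ≠ 0 := by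
    intro h0
    rw [h0] at hsigT
    exact sigT_ne_zero hα (by rw [hsigT, scaleLR_zero_β, sigT_zero])
  have hf : f ≠ 0 := by
    intro h0
    rw [h0, (LMb_bot_iff (0 : MixedAlg R k n)).2 rfl] at hLMb
    exact tgb_ne_zero hord m hc₀ hg0 b ((LMb_bot_iff _).1 hLMb.symm)
  set T := LMd f with hT
  have hLMb' : (↑T : WithBot (MMon k n)) = ↑(phiM m b (LMd g)) := by
    rw [← LMb_eq_coe hf, hLMb, LMb_tgb_coe hord m hc₀ hg0 b]
  have hTeq : phiM m b (LMd g) = T := (WithBot.coe_inj.1 hLMb').symm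
  obtain ⟨hsmd, hscoef⟩ := sigT_inj hsigT hα
  have hsigbα : sigb α = ↑(mulLR m (sigMd β) b) := by
    rw [sigb_eq_coe hα, hsmd, sigMd_scaleLR hord m hc₀ hβ b]
  -- the final reducer construction
  have final : ∀ (g' : MixedAlg R k n) (β' : SigModule R k n r) (m' : MMon k n)
      (b' : FreeMonoid (Fin n)), (g', β') ∈ G → g' ≠ 0 →
      phiM m' b' (LMd g') = T → sigb (scaleLR m' (1 : R) β' b') ≤ sigb α →
      LC g' ∣ LC f → SigReducible G f α := by
    rintro g' β' m' b' hG' hg' hT' hsig' ⟨e, he⟩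
    have he0 : e ≠ 0 := by
      rintro rfl
      exact LC_ne hf (by rw [he, mul_zero])
    refine ⟨g', β', hG', m', e, b', he0, ?_, ?_, ?_⟩
    · rw [LTerm_tgb hord m' he0 hg' b', hT']
      show (MonoidAlgebra.single T (e * LC g') : MixedAlg R k n) = LTerm f
      rw [mul_comm, ← he]
      rfl
    · rw [LMb_eq_coe hf, LMb_def', MonoidAlgebra.coeff_sub]
      apply supmax_sub_lt
      · exact le_of_eq (LMb_eq_coe hf)
      · have h2 := LMb_tgb_coe hord m' he0 hg' b'
        rw [hT'] at h2
        exact le_of_eq h2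
      · have h1 : (trm m' e * g' * wrd b' : MixedAlg R k n).coeff T = e * LC g' := by
          rw [← hT', tgb_eq, Finsupp.mapDomain_apply (phiM_inj m' b'), Finsupp.smul_apply,
            smul_eq_mul]
          rfl
        rw [h1, mul_comm, ← he]
        rfl
    · calc sigb (scaleLR m' e β' b') = sigb (scaleLR m' (1 : R) β' b') := by
            rw [sigb_scaleLR hord m' he0 β' b', sigb_scaleLR hord m' one_ne_zero β' b']
        _ ≤ sigb α := hsig'
  by_cases hdvd : LC g ∣ LC f
  · refine final g β m b hgG hg0 hTeq ?_ hdvd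
    rw [sigb_scaleLR_coe hord m one_ne_zero hβ b, hsigbα]
  · -- one reduction step on h' = f - t₀ g b
    have htgbT : (trm m c₀ * g * wrd b : MixedAlg R k n).coeff T = c₀ * LC g := by
      rw [← hTeq, tgb_eq, Finsupp.mapDomain_apply (phiM_inj m b), Finsupp.smul_apply,
        smul_eq_mul]
      rfl
    have hh'T : (f - trm m c₀ * g * wrd b : MixedAlg R k n).coeff T = LC f - c₀ * LC g := by
      rw [MonoidAlgebra.coeff_sub, Finsupp.sub_apply, htgbT]
      rfl
    have hcoefne : LC f - c₀ * LC g ≠ 0 := by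
      intro h0
      exact hdvd ⟨c₀, by rw [sub_eq_zero] at h0; rw [h0, mul_comm]⟩
    have hh0 : f - trm m c₀ * g * wrd b ≠ 0 := by
      intro h0
      exact hcoefne (by rw [← hh'T, h0]; rfl)
    have hsupf : (f : MixedAlg R k n).coeff.support.max ≤ ↑T := le_of_eq (LMb_eq_coe hf)
    have hsuptgb : (trm m c₀ * g * wrd b).coeff.support.max ≤ (↑T : WithBot (MMon k n)) := by
      have h2 := LMb_tgb_coe hord m hc₀ hg0 b
      rw [hTeq] at h2
      exact le_of_eq h2
    have hsupt : ∀ τ ∈ (f - trm m c₀ * g * wrd b).coeff.support, τ ≤ T := by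
      intro τ hτ
      rcases Finset.mem_union.1 (Finsupp.support_sub hτ) with h1 | h1
      · exact WithBot.coe_le_coe.1 (le_trans (Finset.le_max h1) hsupf)
      · exact WithBot.coe_le_coe.1 (le_trans (Finset.le_max h1) hsuptgb)
    have hmaxh' : (f - trm m c₀ * g * wrd b).coeff.support.max = ↑T :=
      supmax_eq (by rw [hh'T]; exact hcoefne) hsupt
    have hLMdh' : LMd (f - trm m c₀ * g * wrd b) = T := by
      rw [LMd, hmaxh']; rfl
    have hLCh' : LC (f - trm m c₀ * g * wrd b) = LC f - c₀ * LC g := by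
      rw [LC, hLMdh', hh'T]
    -- module side
    have hbar' : barMap F (α - scaleLR m c₀ β b) = f - trm m c₀ * g * wrd b := by
      rw [barMap_sub, hlab, barMap_scaleLR, hGI (g, β) hgG]
    have hsax : sigb (α - scaleLR m c₀ β b) < sigb α := by
      rw [hsigbα]
      have hXle : α.support.max ≤ (↑(mulLR m (sigMd β) b) : WithBot (ModMon k n r)) :=
        le_of_eq hsigbα
      have hYle : (scaleLR m c₀ β b).support.max
          ≤ (↑(mulLR m (sigMd β) b) : WithBot (ModMon k n r)) :=
        le_of_eq (sigb_scaleLR_coe hord m hc₀ hβ b)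
      have e1 : mulLR m (sigMd β) b = sigMd α := by
        rw [hsmd, sigMd_scaleLR hord m hc₀ hβ b]
      have hcc : α (mulLR m (sigMd β) b) = (scaleLR m c₀ β b) (mulLR m (sigMd β) b) := by
        rw [e1]
        calc α (sigMd α) = sigC α := rfl
          _ = sigC (scaleLR m c₀ β b) := hscoef
          _ = (scaleLR m c₀ β b) (sigMd α) := by rw [sigC, ← hsmd]
      exact supmax_sub_lt hXle hYle hcc
    obtain ⟨g₂, β₂, hg₂G, m₂', c₂, b₂, hc₂, hLT₂, hlt₂, hsig₂⟩ :=
      hGB _ _ hbar' hh0 hsax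
    have hg₂0 : g₂ ≠ 0 := fun h0 => hno β₂ (h0 ▸ hg₂G)
    have hLCh'ne : LC (f - trm m c₀ * g * wrd b) ≠ 0 := by rw [hLCh']; exact hcoefne
    have hLTh' : LTerm (f - trm m c₀ * g * wrd b)
        = MonoidAlgebra.single T (LC f - c₀ * LC g) := by
      rw [LTerm, hLMdh', hLCh']
      rfl
    rw [LTerm_tgb hord m₂' hc₂ hg₂0 b₂, hLTh'] at hLT₂
    rcases MonoidAlgebra.single_inj.1 hLT₂ with ⟨hm2, hc2⟩ | ⟨_, h02⟩
    swap
    · exact absurd h02 hcoefne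
    -- hm2 : phiM m₂' b₂ (LMd g₂) = T, hc2 : c₂ * LC g₂ = LC f - c₀ * LC g
    by_cases hdvd₂ : LC g₂ ∣ LC f
    · refine final g₂ β₂ m₂' b₂ hg₂G hg₂0 hm2 ?_ hdvd₂
      by_cases hβ₂ : β₂ = 0
      · rw [hβ₂, scaleLR_zero_β, (sigb_bot_iff (0 : SigModule R k n r)).2 rfl]
        exact bot_le
      · rw [sigb_scaleLR_coe hord m₂' one_ne_zero hβ₂ b₂,
          ← sigb_scaleLR_coe hord m₂' hc₂ hβ₂ b₂]
        exact le_trans hsig₂ hsax.le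
    · -- double non-divisibility: use the G-polynomial of the ambiguity
      obtain ⟨a₁, n₁, a₂, n₂, l, rw', hW, hmel, hbel, hm'el, hb'el⟩ :=
        mon_decomp (LMd g) (LMd g₂) m m₂' b b₂ (by rw [hTeq, hm2])
      set M₁ : MMon k n := ⟨((LMd g).c ⊔ (LMd g₂).c) - (LMd g).c, a₁⟩ with hM₁
      set M₂ : MMon k n := ⟨((LMd g).c ⊔ (LMd g₂).c) - (LMd g₂).c, a₂⟩ with hM₂
      have hIsAmb : IsAmb g g₂ M₁ n₁ M₂ n₂ := ⟨a₁, n₁, a₂, n₂, hW, rfl, rfl, rfl, rfl⟩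
      obtain ⟨x, y, hxy⟩ := exists_gcd_eq_mul_add_mul (LC g) (LC g₂)
      have hBez : BezoutFor x y g g₂ := by
        show x * LC g + y * LC g₂ = gcd (LC g) (LC g₂)
        rw [mul_comm x, mul_comm y]
        exact hxy.symm
      have hgcd0 : gcd (LC g) (LC g₂) ≠ 0 := fun h =>
        LC_ne hg0 ((gcd_eq_zero_iff _ _).1 h).1
      have hgdvd : gcd (LC g) (LC g₂) ∣ LC f := by
        have hlf : LC f = c₀ * LC g + c₂ * LC g₂ := by
          rw [hc2]; ring
        rw [hlf]
        exact dvd_add (Dvd.dvd.mul_left (gcd_dvd_left _ _) c₀)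
          (Dvd.dvd.mul_left (gcd_dvd_right _ _) c₂)
      have hx0 : x ≠ 0 := by
        rintro rfl
        exact hdvd₂ (dvd_trans ⟨y, by rw [hxy]; ring⟩ hgdvd)
      have hy0 : y ≠ 0 := by
        rintro rfl
        exact hdvd (dvd_trans ⟨x, by rw [hxy]; ring⟩ hgdvd)
      -- signature comparison
      have hlift1 : mulLR l (mulLR M₁ (sigMd β) n₁) rw' = mulLR m (sigMd β) b := by
        rw [mulLR_comp, ← hmel, ← hbel]
      have hmon2lt : ∀ _ : β₂ ≠ 0, mulLR M₂ (sigMd β₂) n₂ < mulLR M₁ (sigMd β) n₁ := by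
        intro hβ₂
        by_contra hle
        push_neg at hle
        have hlift2 : mulLR l (mulLR M₂ (sigMd β₂) n₂) rw' = mulLR m₂' (sigMd β₂) b₂ := by
          rw [mulLR_comp, ← hm'el, ← hb'el]
        have h1 : mulLR m (sigMd β) b ≤ mulLR m₂' (sigMd β₂) b₂ := by
          rw [← hlift1, ← hlift2]
          exact hord.mod_mul l rw' _ _ hle
        have h2 : (↑(mulLR m₂' (sigMd β₂) b₂) : WithBot (ModMon k n r))
            < ↑(mulLR m (sigMd β) b) := by
          rw [← sigb_scaleLR_coe hord m₂' hc₂ hβ₂ b₂, ← hsigbα]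
          exact lt_of_le_of_lt hsig₂ hsax
        exact absurd (lt_of_le_of_lt (WithBot.coe_le_coe.2 h1) h2) (lt_irrefl _)
      have hside2 : ∀ z : R, sigb (scaleLR M₂ z β₂ n₂)
          < (↑(mulLR M₁ (sigMd β) n₁) : WithBot (ModMon k n r)) := by
        intro z
        by_cases hz : z = 0
        · rw [hz, scaleLR_zero_c, (sigb_bot_iff (0 : SigModule R k n r)).2 rfl]
          exact WithBot.bot_lt_coe _
        by_cases hβ₂0 : β₂ = 0
        · rw [hβ₂0, scaleLR_zero_β, (sigb_bot_iff (0 : SigModule R k n r)).2 rfl]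
          exact WithBot.bot_lt_coe _
        · rw [sigb_scaleLR_coe hord M₂ hz hβ₂0 n₂]
          exact WithBot.coe_lt_coe.2 (hmon2lt hβ₂0)
      have hS1 : sigb (scaleLR M₁ x β n₁) = ↑(mulLR M₁ (sigMd β) n₁) :=
        sigb_scaleLR_coe hord M₁ hx0 hβ n₁
      have hGPsig : sigb (GPolM x y β β₂ M₁ n₁ M₂ n₂) = ↑(mulLR M₁ (sigMd β) n₁) := by
        show (scaleLR M₁ x β n₁ + scaleLR M₂ y β₂ n₂).support.max = _
        exact (supmax_add_eq hS1 (hside2 y)).1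
      have hcofL0 : cofL g g₂ ≠ 0 := by
        intro h0
        have hlcm0 : lcm (LC g) (LC g₂) ≠ 0 := fun h =>
          ((lcm_eq_zero_iff _ _).1 h).elim (LC_ne hg0) (LC_ne hg₂0)
        have hsp := Classical.choose_spec (dvd_lcm_left (LC g) (LC g₂))
        rw [cofL] at h0
        rw [h0, mul_zero] at hsp
        exact hlcm0 hsp
      have hambsig : sigb (ambSIG g g₂ β β₂ M₁ n₁ M₂ n₂) = ↑(mulLR M₁ (sigMd β) n₁) := by
        have hcond : sigb (scaleLR M₂ (cofR g g₂) β₂ n₂)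
            ≤ sigb (scaleLR M₁ (cofL g g₂) β n₁) := by
          rw [sigb_scaleLR_coe hord M₁ hcofL0 hβ n₁]
          exact (hside2 _).le
        rw [ambSIG, if_pos hcond, sigb_sigT, sigb_scaleLR_coe hord M₁ hcofL0 hβ n₁]
      have hred := hcomp g β g₂ β₂ hgG hg₂G M₁ n₁ M₂ n₂ hIsAmb x y hBez
        (by rw [hGPsig, hambsig])
      obtain ⟨g₃, β₃, hg₃G, m₃, c₃, b₃, hc₃, hLT₃, hlt₃, hsig₃⟩ := hred
      have hg₃0 : g₃ ≠ 0 := fun h0 => hno β₃ (h0 ▸ hg₃G)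
      -- leading term of the G-polynomial
      have hMstar : phiM M₁ n₁ (LMd g) = phiM M₂ n₂ (LMd g₂) := amb_top_eq (LMd g) (LMd g₂) hW
      have hX1 : (trm M₁ x * g * wrd n₁ : MixedAlg R k n).coeff (phiM M₁ n₁ (LMd g)) = x * LC g := by
        rw [tgb_eq, Finsupp.mapDomain_apply (phiM_inj M₁ n₁), Finsupp.smul_apply, smul_eq_mul]
        rfl
      have hX2 : (trm M₂ y * g₂ * wrd n₂ : MixedAlg R k n).coeff (phiM M₁ n₁ (LMd g)) = y * LC g₂ := by
        rw [hMstar, tgb_eq, Finsupp.mapDomain_apply (phiM_inj M₂ n₂), Finsupp.smul_apply,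
          smul_eq_mul]
        rfl
      have hPapp : (GPolP x y g g₂ M₁ n₁ M₂ n₂).coeff (phiM M₁ n₁ (LMd g))
          = gcd (LC g) (LC g₂) := by
        show (trm M₁ x * g * wrd n₁ + trm M₂ y * g₂ * wrd n₂ : MixedAlg R k n).coeff (phiM M₁ n₁ (LMd g)) = _
        rw [MonoidAlgebra.coeff_add, Finsupp.add_apply, hX1, hX2, hxy]
        ring
      have hsup1 : (trm M₁ x * g * wrd n₁).coeff.support.max
          ≤ (↑(phiM M₁ n₁ (LMd g)) : WithBot (MMon k n)) :=
        le_of_eq (LMb_tgb_coe hord M₁ hx0 hg0 n₁)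
      have hsup2 : (trm M₂ y * g₂ * wrd n₂).coeff.support.max
          ≤ (↑(phiM M₁ n₁ (LMd g)) : WithBot (MMon k n)) := by
        rw [hMstar]
        exact le_of_eq (LMb_tgb_coe hord M₂ hy0 hg₂0 n₂)
      have hPsup : ∀ τ ∈ (GPolP x y g g₂ M₁ n₁ M₂ n₂).coeff.support, τ ≤ phiM M₁ n₁ (LMd g) := by
        intro τ hτ
        have hτ' : τ ∈ ((trm M₁ x * g * wrd n₁).coeff + (trm M₂ y * g₂ * wrd n₂).coeff).support := hτ
        rcases Finset.mem_union.1 (Finsupp.support_add hτ') with h1 | h1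
        · exact WithBot.coe_le_coe.1 (le_trans (Finset.le_max h1) hsup1)
        · exact WithBot.coe_le_coe.1 (le_trans (Finset.le_max h1) hsup2)
      have hPmax : (GPolP x y g g₂ M₁ n₁ M₂ n₂).coeff.support.max = ↑(phiM M₁ n₁ (LMd g)) :=
        supmax_eq (by rw [hPapp]; exact hgcd0) hPsup
      have hLMdP : LMd (GPolP x y g g₂ M₁ n₁ M₂ n₂) = phiM M₁ n₁ (LMd g) := by
        rw [LMd, hPmax]; rfl
      have hLTP : LTerm (GPolP x y g g₂ M₁ n₁ M₂ n₂)
          = MonoidAlgebra.single (phiM M₁ n₁ (LMd g)) (gcd (LC g) (LC g₂)) := by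
        rw [LTerm, hLMdP, LC, hLMdP, hPapp]
        rfl
      rw [LTerm_tgb hord m₃ hc₃ hg₃0 b₃, hLTP] at hLT₃
      rcases MonoidAlgebra.single_inj.1 hLT₃ with ⟨hm3, hc3⟩ | ⟨_, h03⟩
      swap
      · exact absurd h03 hgcd0
      -- final reducer: (g₃, β₃, l * m₃, b₃ * rw')
      obtain ⟨w₀, hw₀⟩ := hgdvd
      refine final g₃ β₃ (l * m₃) (b₃ * rw') hg₃G hg₃0 ?_ ?_ ⟨c₃ * w₀, by rw [hw₀, ← hc3]; ring⟩
      · rw [← phiM_comp, hm3, phiM_comp, ← hmel, ← hbel]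
        exact hTeq
      · by_cases hβ₃ : β₃ = 0
        · rw [hβ₃, scaleLR_zero_β, (sigb_bot_iff (0 : SigModule R k n r)).2 rfl]
          exact bot_le
        · rw [sigb_scaleLR_coe hord _ one_ne_zero hβ₃ _, ← mulLR_comp]
          have h3le : mulLR m₃ (sigMd β₃) b₃ ≤ mulLR M₁ (sigMd β) n₁ := by
            have h4 := le_trans hsig₃ (le_of_eq hGPsig)
            rw [sigb_scaleLR_coe hord m₃ hc₃ hβ₃ b₃] at h4
            exact WithBot.coe_le_coe.1 h4
          have h5 := hord.mod_mul l rw' _ _ h3le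
          rw [hlift1] at h5
          rw [hsigbα]
          exact WithBot.coe_le_coe.2 h5
end

section
/- In Algorithm 1 (signature Gröbner basis computation), with the spooling mechanism that enumerates for each pair of basis elements all of their ambiguities via the functions firstamb and nextamb, and adds the corresponding S- and G-polynomials to the queue P in rounds, if insertion into and selection from P is done first in, first out, then the algorithm is fair: for every ambiguity of elements of G^{[Σ]}, the corresponding S- and G-polynomials are eventually processed in the main loop or discarded. -/
/-- Proposition: fairness of the spooled algorithm.  We model
the pair-handling machinery of Algorithm 1: a basis `G` of labeled polynomials
growing over time, a spool `spool` of ambiguities, and a queue `Q` of pairs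
(S- and G-polynomials).  The functions `firstamb`/`nextamb` enumerate, for each
pair of basis elements, all of their ambiguities.  Each round, for every
ambiguity currently in the spool, the corresponding S-polynomial (if the
ambiguity is regular; otherwise it is discarded) and G-polynomial are inserted
at the back of the queue, and the spool entry is replaced by the next
ambiguity; whenever two elements are in the basis, their first ambiguity is
put into the spool.  If insertion into and selection from the queue `Q` are
done first in, first out (each iteration the front element of `Q` is selected
and removed, and the new pairs are appended at the back), then the algorithm is
fair: for every ambiguity of elements of the basis, the corresponding S- and
G-polynomials are eventually processed in the main loop (i.e. eventually appear
at the front of the queue) or discarded (the S-polynomial of a non-regular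
ambiguity). -/
theorem algorithm_is_fair
    (Lab Amb Pair : Type)
    -- the set of ambiguities of two labeled polynomials
    (ambOf : Lab → Lab → Set Amb)
    -- enumeration of the ambiguities of a pair of labeled polynomials
    (firstamb : Lab → Lab → Amb) (nextamb : Amb → Amb)
    (henum : ∀ g h a, a ∈ ambOf g h → ∃ N : ℕ, nextamb^[N] (firstamb g h) = a)
    -- the S- and G-polynomial pairs of an ambiguity, and regularity
    (sPair gPair : Amb → Pair) (regular : Amb → Prop)
    -- the state of the algorithm at each iteration: basis, queue and spool
    (G : ℕ → Set Lab) (Q : ℕ → List Pair) (spool : ℕ → List Amb)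
    -- FIFO: each iteration the front element of the queue is selected and
    -- removed, and the newly produced pairs are appended at the back
    (hQ : ∀ t, ∃ new : List Pair, Q (t + 1) = (Q t).tail ++ new)
    -- each iteration, every ambiguity in the spool has its S-polynomial (if
    -- regular, otherwise it is discarded) and its G-polynomial inserted into
    -- the queue...
    (hins : ∀ t, ∀ a ∈ spool t, (regular a → sPair a ∈ Q (t + 1)) ∧ gPair a ∈ Q (t + 1))
    -- ...and is replaced by the next ambiguity in the enumeration
    (hnext : ∀ t, ∀ a ∈ spool t, nextamb a ∈ spool (t + 1))
    -- whenever two elements belong to the basis, their first ambiguity is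
    -- eventually put into the spool
    (hfirst : ∀ g h t, g ∈ G t → h ∈ G t → ∃ t', firstamb g h ∈ spool t') :
    ∀ g h t, g ∈ G t → h ∈ G t → ∀ a ∈ ambOf g h,
      ((∃ s, (Q s).head? = some (sPair a)) ∨ ¬ regular a) ∧
      (∃ s, (Q s).head? = some (gPair a)) := by

  intro g h t hg hh a ha
  -- every element of some Q t eventually reaches the front
  have front : ∀ i : ℕ, ∀ t p, (Q t)[i]? = some p → ∃ s, (Q s).head? = some p := by
    intro i
    induction i with
    | zero =>
      intro t p hp
      exact ⟨t, by rwa [List.head?_eq_getElem?]⟩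
    | succ i ih =>
      intro t p hp
      obtain ⟨new, hnew⟩ := hQ t
      apply ih (t + 1) p
      rw [hnew]
      have htail : (Q t).tail[i]? = some p := by
        rwa [List.getElem?_tail]
      have hlt : i < (Q t).tail.length := by
        by_contra hge
        rw [List.getElem?_eq_none (le_of_not_gt hge)] at htail
        exact nomatch htail
      rw [List.getElem?_append, if_pos hlt]
      exact htail
  have mem_front : ∀ t p, p ∈ Q t → ∃ s, (Q s).head? = some p := by
    intro t p hp
    obtain ⟨i, hi, hget⟩ := List.getElem_of_mem hp
    exact front i t p (by rw [List.getElem?_eq_getElem hi]; exact congrArg some hget)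
  -- a eventually appears in the spool
  obtain ⟨N, hN⟩ := henum g h a ha
  obtain ⟨t', ht'⟩ := hfirst g h t hg hh
  have hspool : ∀ n : ℕ, nextamb^[n] (firstamb g h) ∈ spool (t' + n) := by
    intro n
    induction n with
    | zero => simpa using ht'
    | succ n ihn =>
      have := hnext (t' + n) _ ihn
      rw [Function.iterate_succ_apply']
      exact this
  have haspool : a ∈ spool (t' + N) := hN ▸ hspool N
  obtain ⟨hs, hgp⟩ := hins (t' + N) a haspool
  constructor
  · by_cases hr : regular a
    · exact Or.inl (mem_front _ _ (hs hr))
    · exact Or.inr hr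
  · exact mem_front _ _ hgp
end
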